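/- arXiv:1309.1987 — 2 statements merged into one kernel-verified Lean document; each statement's English description precedes it below -/
import Mathlib

section
/- For every positive integer N, the set {1, 2, ..., N} can be partitioned into an initial segment A equal to {1}, {1,2}, or {1,2,3}, together with, for each i from 2 to r, b_i ∈ {1,2} intervals of consecutive integers of the form {R, R+1, ..., R+F_i-1} with R ≥ F_i, where r ≤ 1 + log_φ N. -/
/-- Fibonacci numbers with `F 0 = F 1 = 1`. -/
def F (i : ℕ) : ℕ := Nat.fib (i + 1)

noncomputable def phi : ℝ := (1 + Real.sqrt 5) / 2

lemma F_pos (i : ℕ) : 1 ≤ F i := Nat.fib_pos.2 (Nat.succ_pos i)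

lemma sumF : ∀ r, 1 ≤ r → (∑ i ∈ Finset.Icc 2 r, F i) + 3 = Nat.fib (r + 3) := by
  intro r hr
  induction r, hr using Nat.le_induction with
  | base => decide
  | succ n hn ih =>
      rw [Finset.sum_Icc_succ_top (by omega : 2 ≤ n + 1)]
      have h1 : Nat.fib (n + 1 + 3) = Nat.fib (n + 2) + Nat.fib (n + 3) := Nat.fib_add_two
      have h2 : F (n + 1) = Nat.fib (n + 2) := rfl
      omega

lemma fib_lb : ∀ n, n + 2 ≤ Nat.fib (n + 3) := by
  intro n
  induction n with
  | zero => decide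
  | succ m ih =>
      have h1 : Nat.fib (m + 1 + 3) = Nat.fib (m + 2) + Nat.fib (m + 3) := Nat.fib_add_two
      have hp : 1 ≤ Nat.fib (m + 2) := Nat.fib_pos.2 (by omega)
      omega

/-- every `M < fib (r+3)` is `c + ∑_{i=2}^r ε i * F i` with `c ≤ 2`, `ε i ≤ 1`. -/
lemma repA : ∀ r M, M < Nat.fib (r + 3) →
    ∃ c, c ≤ 2 ∧ ∃ ε : ℕ → ℕ, (∀ i, ε i ≤ 1) ∧
      M = c + ∑ i ∈ Finset.Icc 2 r, ε i * F i := by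
  intro r
  induction r with
  | zero =>
      intro M hM
      have h3 : Nat.fib (0 + 3) = 2 := by decide
      refine ⟨M, by omega, fun _ => 0, fun _ => by simp, ?_⟩
      simp
  | succ n ih =>
      intro M hM
      rcases n with _ | m
      · -- r = 1
        have h4 : Nat.fib (0 + 1 + 3) = 3 := by decide
        refine ⟨M, by omega, fun _ => 0, fun _ => by simp, ?_⟩
        simp
      · -- r = m + 2
        have hM5 : M < Nat.fib (m + 5) := hM
        have hfib : Nat.fib (m + 5) = Nat.fib (m + 3) + Nat.fib (m + 4) := Nat.fib_add_two
        by_cases h : M < Nat.fib (m + 4)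
        · obtain ⟨c, hc, ε, hε, hM'⟩ := ih M h
          refine ⟨c, hc, Function.update ε (m + 2) 0, ?_, ?_⟩
          · intro i
            rcases eq_or_ne i (m + 2) with rfl | hne
            · simp
            · simpa [Function.update_of_ne hne] using hε i
          · rw [Finset.sum_Icc_succ_top (by omega : 2 ≤ m + 2)]
            have hs : ∑ i ∈ Finset.Icc 2 (m + 1), Function.update ε (m + 2) 0 i * F i
                = ∑ i ∈ Finset.Icc 2 (m + 1), ε i * F i := by
              apply Finset.sum_congr rfl
              intro i hi
              simp only [Finset.mem_Icc] at hi
              rw [Function.update_of_ne (by omega)]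
            rw [hs, Function.update_self]
            simpa using hM'
        · -- M ≥ fib (m+4)
          push_neg at h
          have hle : Nat.fib (m + 3) ≤ M :=
            le_trans (Nat.fib_le_fib_succ : Nat.fib (m + 3) ≤ Nat.fib (m + 4)) h
          have hlt : M - Nat.fib (m + 3) < Nat.fib (m + 4) := by omega
          obtain ⟨c, hc, ε, hε, hM'⟩ := ih (M - Nat.fib (m + 3)) hlt
          refine ⟨c, hc, Function.update ε (m + 2) 1, ?_, ?_⟩
          · intro i
            rcases eq_or_ne i (m + 2) with rfl | hne
            · simp
            · simpa [Function.update_of_ne hne] using hε i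
          · rw [Finset.sum_Icc_succ_top (by omega : 2 ≤ m + 2)]
            have hs : ∑ i ∈ Finset.Icc 2 (m + 1), Function.update ε (m + 2) 1 i * F i
                = ∑ i ∈ Finset.Icc 2 (m + 1), ε i * F i := by
              apply Finset.sum_congr rfl
              intro i hi
              simp only [Finset.mem_Icc] at hi
              rw [Function.update_of_ne (by omega)]
            rw [hs, Function.update_self]
            have hF : F (m + 1 + 1) = Nat.fib (m + 3) := rfl
            omega

lemma phi_sq : phi ^ 2 = phi + 1 := Real.goldenRatio_sq

lemma one_lt_phi : (1 : ℝ) < phi := Real.one_lt_goldenRatio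

lemma phi_lt_two : phi < 2 := Real.goldenRatio_lt_two

lemma phi_pow_le_fib : ∀ n, phi ^ n ≤ (Nat.fib (n + 2) : ℝ) := by
  have key : ∀ n, phi ^ n ≤ (Nat.fib (n + 2) : ℝ) ∧ phi ^ (n + 1) ≤ (Nat.fib (n + 3) : ℝ) := by
    intro n
    induction n with
    | zero =>
        constructor
        · have h1 : Nat.fib (0 + 2) = 1 := by decide
          rw [pow_zero, h1]; norm_num
        · have h2 : Nat.fib (0 + 3) = 2 := by decide
          rw [pow_one, h2]
          norm_num
          exact le_of_lt phi_lt_two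
    | succ m ih =>
        obtain ⟨h1, h2⟩ := ih
        refine ⟨h2, ?_⟩
        have hsq : phi ^ (m + 2) = phi ^ (m + 1) + phi ^ m := by
          have he : phi ^ (m + 2) = phi ^ m * phi ^ 2 := by ring
          rw [he, phi_sq]; ring
        have hfib : (Nat.fib (m + 4) : ℝ) = (Nat.fib (m + 3) : ℝ) + (Nat.fib (m + 2) : ℝ) := by
          have : Nat.fib (m + 4) = Nat.fib (m + 2) + Nat.fib (m + 3) := Nat.fib_add_two
          rw [this]; push_cast; ring
        show phi ^ (m + 2) ≤ (Nat.fib (m + 4) : ℝ)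
        rw [hsq, hfib]
        exact add_le_add h2 h1
  exact fun n => (key n).1

lemma Icc_union_Icc (a b c : ℕ) (h1 : a ≤ b + 1) (h2 : b ≤ c) :
    Set.Icc a b ∪ Set.Icc (b + 1) c = Set.Icc a c := by
  ext x; simp only [Set.mem_union, Set.mem_Icc]; omega

lemma level (Pv Fi bi : ℕ) (hF : 1 ≤ Fi) (hb : bi = 1 ∨ bi = 2) :
    (⋃ j ∈ Set.Icc 1 bi, Set.Icc (Pv + (j - 1) * Fi + 1) (Pv + (j - 1) * Fi + 1 + Fi - 1))
      = Set.Icc (Pv + 1) (Pv + bi * Fi) := by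
  rcases hb with rfl | rfl
  · rw [Set.Icc_self, Set.biUnion_singleton]
    ext x; simp only [Set.mem_Icc]; omega
  · have h2 : Set.Icc (1 : ℕ) 2 = {1, 2} := by
      ext x; simp only [Set.mem_Icc, Set.mem_insert_iff, Set.mem_singleton_iff]; omega
    rw [h2, Set.biUnion_pair]
    ext x; simp only [Set.mem_union, Set.mem_Icc]; omega

theorem stmt2 (N : ℕ) (hN : 0 < N) :
    ∃ (r s : ℕ) (b : ℕ → ℕ) (R : ℕ → ℕ → ℕ),
      s ∈ ({1, 2, 3} : Set ℕ) ∧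
      (r : ℝ) ≤ 1 + Real.logb phi N ∧
      (∀ i, 2 ≤ i → i ≤ r → b i ∈ ({1, 2} : Set ℕ)) ∧
      (∀ i, 2 ≤ i → i ≤ r → ∀ j, 1 ≤ j → j ≤ b i → F i ≤ R i j) ∧
      (Set.Icc 1 N =
        Set.Icc 1 s ∪
          ⋃ i ∈ Set.Icc 2 r, ⋃ j ∈ Set.Icc 1 (b i),
            Set.Icc (R i j) (R i j + F i - 1)) ∧
      -- the total number of elements of the pieces equals `N`, so together with the
      -- covering property above the pieces are pairwise disjoint (a partition)
      s + ∑ i ∈ Finset.Icc 2 r, b i * F i = N := by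
  have hlogb : (0 : ℝ) ≤ Real.logb phi N :=
    Real.logb_nonneg one_lt_phi (by exact_mod_cast hN)
  by_cases hsmall : N ≤ 3
  · refine ⟨0, N, fun _ => 1, fun _ _ => 0, ?_, ?_, ?_, ?_, ?_, ?_⟩
    · interval_cases N <;> simp
    · push_cast; linarith
    · intro i h2 h0; omega
    · intro i h2 h0; omega
    · have h0 : Set.Icc (2 : ℕ) 0 = ∅ := by ext x; simp only [Set.mem_Icc, Set.mem_empty_iff_false, iff_false, not_and]; omega
      rw [h0]; simp
    · simp
  · push_neg at hsmall
    -- N ≥ 4 : choose r maximal with fib (r+3) ≤ N + 2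
    have h5 : Nat.fib (2 + 3) = 5 := by decide
    have hP2 : Nat.fib (2 + 3) ≤ N + 2 := by omega
    set r := Nat.findGreatest (fun m => Nat.fib (m + 3) ≤ N + 2) N with hr
    have hrN : 2 ≤ r := by
      rw [hr]
      exact Nat.le_findGreatest (by omega) hP2
    have hrspec : Nat.fib (r + 3) ≤ N + 2 := by
      have h := Nat.findGreatest_spec (m := 2) (n := N)
        (P := fun m => Nat.fib (m + 3) ≤ N + 2) (by omega) hP2
      rw [← hr] at h
      exact h
    have hrmax : N + 2 < Nat.fib (r + 4) := by
      by_cases hcase : r + 1 ≤ N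
      · have h := Nat.findGreatest_is_greatest
          (show Nat.findGreatest (fun m => Nat.fib (m + 3) ≤ N + 2) N < r + 1 by omega) hcase
        have h2 : ¬ (Nat.fib (r + 1 + 3) ≤ N + 2) := h
        have he : Nat.fib (r + 1 + 3) = Nat.fib (r + 4) := rfl
        omega
      · have hlb := fib_lb (r + 1)
        have he : Nat.fib (r + 1 + 3) = Nat.fib (r + 4) := rfl
        omega
    -- representation of the excess
    have hM3 : N + 2 - Nat.fib (r + 3) < Nat.fib (r + 3) := by
      have hfib : Nat.fib (r + 4) = Nat.fib (r + 2) + Nat.fib (r + 3) := Nat.fib_add_two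
      have hle : Nat.fib (r + 2) ≤ Nat.fib (r + 3) := Nat.fib_le_fib_succ
      omega
    obtain ⟨c, hc, ε, hε, hMrep⟩ := repA r (N + 2 - Nat.fib (r + 3)) hM3
    set s := c + 1 with hs
    set b : ℕ → ℕ := fun i => ε i + 1 with hb
    have hsum3 := sumF r (by omega)
    have hbF : s + ∑ i ∈ Finset.Icc 2 r, b i * F i = N := by
      have hexp : ∑ i ∈ Finset.Icc 2 r, b i * F i
          = (∑ i ∈ Finset.Icc 2 r, ε i * F i) + ∑ i ∈ Finset.Icc 2 r, F i := by
        rw [← Finset.sum_add_distrib]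
        apply Finset.sum_congr rfl
        intro i _
        simp only [hb]
        ring
      rw [hexp]
      omega
    -- partial sums
    set Q : ℕ → ℕ := fun i => s + ∑ k ∈ Finset.Ico 2 i, b k * F k with hQ
    set R : ℕ → ℕ → ℕ := fun i j => Q i + (j - 1) * F i + 1 with hR
    have hQstep : ∀ i, 2 ≤ i → Q (i + 1) = Q i + b i * F i := by
      intro i hi
      simp only [hQ]
      rw [Finset.sum_Ico_succ_top hi]
      ring
    have hQmono : Monotone Q := by
      apply monotone_nat_of_le_succ
      intro i
      rcases le_or_gt 2 i with hi | hi
      · rw [hQstep i hi]; omega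
      · interval_cases i
        · simp only [hQ]
          rw [show Finset.Ico 2 0 = ∅ from rfl, show Finset.Ico 2 1 = ∅ from rfl]
        · simp only [hQ]
          rw [show Finset.Ico 2 1 = ∅ from rfl, show Finset.Ico 2 2 = ∅ from rfl]
    have hQ2 : Q 2 = s := by
      simp only [hQ]
      rw [show Finset.Ico 2 2 = ∅ from rfl]
      simp
    have hQtop : Q (r + 1) = N := by
      simp only [hQ, Finset.Ico_add_one_right_eq_Icc]
      exact hbF
    -- lower bound for Q i
    have hQlb : ∀ i, 2 ≤ i → F i ≤ Q i + 1 := by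
      intro i hi
      have hico : Finset.Ico 2 i = Finset.Icc 2 (i - 1) := by
        rw [← Finset.Ico_add_one_right_eq_Icc]
        congr 1
        omega
      have hQi : Q i = s + ∑ k ∈ Finset.Icc 2 (i - 1), b k * F k := by
        simp only [hQ]
        rw [hico]
      have hsum : (∑ k ∈ Finset.Icc 2 (i - 1), F k) + 3 = Nat.fib (i - 1 + 3) :=
        sumF (i - 1) (by omega)
      have hle : ∑ k ∈ Finset.Icc 2 (i - 1), F k
          ≤ ∑ k ∈ Finset.Icc 2 (i - 1), b k * F k := by
        apply Finset.sum_le_sum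
        intro k _
        have h1 : 1 ≤ b k := by simp [hb]
        calc F k = 1 * F k := (one_mul _).symm
        _ ≤ b k * F k := Nat.mul_le_mul_right _ h1
      have hfs : Nat.fib (i - 1 + 3) = Nat.fib (i + 2) := by congr 1; omega
      have hff : Nat.fib (i + 2) = Nat.fib i + Nat.fib (i + 1) := Nat.fib_add_two
      have hfp : 1 ≤ Nat.fib i := Nat.fib_pos.2 (by omega)
      have hFi : F i = Nat.fib (i + 1) := rfl
      omega
    refine ⟨r, s, b, R, ?_, ?_, ?_, ?_, ?_, hbF⟩
    · -- s ∈ {1,2,3}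
      simp only [Set.mem_insert_iff, Set.mem_singleton_iff, hs]
      omega
    · -- r bound
      have hpow : phi ^ (r + 1) ≤ (Nat.fib (r + 3) : ℝ) := phi_pow_le_fib (r + 1)
      have hNfib : (Nat.fib (r + 3) : ℝ) ≤ (N : ℝ) + 2 := by exact_mod_cast hrspec
      have hphi1 := one_lt_phi
      have hphi0 : (0 : ℝ) < phi := lt_trans one_pos hphi1
      have hφ2 : (2 : ℝ) ≤ phi ^ 2 := by
        rw [phi_sq]; linarith
      have hmono : phi ^ 2 ≤ phi ^ r := pow_le_pow_right₀ (le_of_lt hphi1) hrN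
      have he : phi ^ (r + 1) = phi ^ r + phi ^ (r - 1) := by
        have e1 : phi ^ (r - 1) * phi ^ 2 = phi ^ (r + 1) := by
          rw [← pow_add]; congr 1; omega
        have e2 : phi ^ (r - 1) * phi = phi ^ r := by
          rw [← pow_succ]; congr 1; omega
        rw [← e1, phi_sq]
        rw [mul_add, mul_one, e2]
      have hNr : phi ^ (r - 1) ≤ (N : ℝ) := by linarith
      have hlog : ((r : ℝ) - 1) ≤ Real.logb phi N := by
        have hcast : ((r - 1 : ℕ) : ℝ) = (r : ℝ) - 1 := by
          have h1 : 1 ≤ r := by omega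
          push_cast [h1]
          ring
        have h2 : ((r - 1 : ℕ) : ℝ) ≤ Real.logb phi N := by
          rw [Real.le_logb_iff_rpow_le hphi1 (by exact_mod_cast hN), Real.rpow_natCast]
          exact hNr
        linarith [hcast ▸ h2]
      linarith
    · -- b i ∈ {1,2}
      intro i _ _
      simp only [Set.mem_insert_iff, Set.mem_singleton_iff, hb]
      have := hε i
      omega
    · -- F i ≤ R i j
      intro i h2 hir j _ _
      simp only [hR]
      exact le_trans (hQlb i h2) (Nat.add_le_add_right (Nat.le_add_right _ _) 1)
    · -- the covering
      have hlevel : ∀ i ∈ Set.Icc 2 r,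
          (⋃ j ∈ Set.Icc 1 (b i), Set.Icc (R i j) (R i j + F i - 1))
            = Set.Icc (Q i + 1) (Q (i + 1)) := by
        intro i hi
        simp only [Set.mem_Icc] at hi
        rw [hQstep i hi.1]
        have hFi := F_pos i
        have hbi : b i = 1 ∨ b i = 2 := by
          have := hε i
          simp only [hb]
          omega
        rw [← level (Q i) (F i) (b i) hFi hbi]
      have hUeq : (⋃ i ∈ Set.Icc 2 r, ⋃ j ∈ Set.Icc 1 (b i),
            Set.Icc (R i j) (R i j + F i - 1))
          = ⋃ i ∈ Set.Icc 2 r, Set.Icc (Q i + 1) (Q (i + 1)) :=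
        Set.iUnion₂_congr hlevel
      have htele : ∀ m, 2 ≤ m →
          (⋃ i ∈ Set.Icc 2 m, Set.Icc (Q i + 1) (Q (i + 1)))
            = Set.Icc (Q 2 + 1) (Q (m + 1)) := by
        intro m hm
        induction m, hm using Nat.le_induction with
        | base => rw [Set.Icc_self, Set.biUnion_singleton]
        | succ n hn ih =>
            have hsplit : Set.Icc 2 (n + 1) = Set.Icc 2 n ∪ {n + 1} := by
              ext x
              simp only [Set.mem_Icc, Set.mem_union, Set.mem_singleton_iff]
              omega
            rw [hsplit, Set.biUnion_union, Set.biUnion_singleton, ih]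
            exact Icc_union_Icc _ _ _
              (by have := hQmono (show 2 ≤ n + 1 by omega); omega)
              (hQmono (show n + 1 ≤ n + 2 by omega))
      rw [hUeq, htele r hrN, hQ2, hQtop,
        Icc_union_Icc 1 s N (by omega) (by omega)]
end

section
/- Let α ∈ ℝ satisfy ‖α n_k − {φ k}‖ ≤ c/k for all k ≥ 1, and let i ≥ 2 and R ≥ F_i be integers. Then there is a bijection σ : {0,...,F_i−1} → {1,...,F_i} such that ‖α n_{R+k} − σ(k)/F_i‖ ≤ (1+c)/F_i for all 0 ≤ k ≤ F_i − 1, where ‖·‖ is the distance to the nearest integer, {·} the fractional part, φ = (1+√5)/2, and F_i Fibonacci numbers with F_0 = F_1 = 1. -/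
/-- Distance from `x` to the nearest integer. -/
noncomputable def nd (x : ℝ) : ℝ := |x - round x|

lemma nd_nonneg (x : ℝ) : 0 ≤ nd x := abs_nonneg _

lemma nd_le_abs_sub_int (x : ℝ) (m : ℤ) : nd x ≤ |x - m| := by
  rcases le_or_gt (1/2) |x - m| with h | h
  · exact (abs_sub_round x).trans h
  · have hr : round x = m := by
      rw [round_eq]
      rw [abs_lt] at h
      apply Int.floor_eq_iff.mpr
      constructor <;> push_cast <;> linarith
    unfold nd
    rw [hr]

lemma nd_le_abs (x : ℝ) : nd x ≤ |x| := by
  simpa using nd_le_abs_sub_int x 0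

lemma nd_add_int (x : ℝ) (m : ℤ) : nd (x + m) = nd x := by
  unfold nd
  rw [round_add_intCast]
  push_cast
  ring_nf

lemma nd_tri (x y z : ℝ) : nd (x - z) ≤ nd (x - y) + nd (y - z) := by
  refine (nd_le_abs_sub_int (x - z) (round (x - y) + round (y - z))).trans ?_
  unfold nd
  push_cast
  have h : x - z - ((round (x - y) : ℝ) + (round (y - z) : ℝ))
      = (x - y - round (x - y)) + (y - z - round (y - z)) := by ring
  rw [h]
  exact abs_add_le _ _

open goldenRatio in
lemma phi_eq_gold : phi = Real.goldenRatio := rfl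

lemma fib_mul_phi (m : ℕ) :
    (Nat.fib m : ℝ) * phi = Nat.fib (m + 1) - Real.goldenConj ^ m := by
  induction m using Nat.twoStepInduction with
  | zero => simp
  | one => simp [phi_eq_gold]; linarith [Real.goldenRatio_add_goldenConj]
  | more n ih1 ih2 =>
    have hf : (Nat.fib (n + 2) : ℝ) = Nat.fib (n + 1) + Nat.fib n := by
      rw [Nat.fib_add_two]; push_cast; ring
    have hf3 : (Nat.fib (n + 3) : ℝ) = Nat.fib (n + 2) + Nat.fib (n + 1) := by
      rw [show n + 3 = (n + 1) + 2 by ring, Nat.fib_add_two]; push_cast; ring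
    have hpsi : Real.goldenConj ^ (n + 2) = Real.goldenConj ^ n * (Real.goldenConj + 1) := by
      rw [← Real.goldenConj_sq]; ring
    have hpsi1 : Real.goldenConj ^ (n + 1) = Real.goldenConj ^ n * Real.goldenConj := by ring
    rw [hf, hf3, hpsi, add_mul, ih1, ih2, hpsi1]
    ring

lemma fib_le_phi_pow (m : ℕ) : (Nat.fib m : ℝ) ≤ phi ^ m := by
  have hphi1 : (1 : ℝ) ≤ phi := by rw [phi_eq_gold]; exact Real.one_lt_goldenRatio.le
  induction m using Nat.twoStepInduction with
  | zero => simp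
  | one => simpa using hphi1
  | more n ih1 ih2 =>
    have hf : (Nat.fib (n + 2) : ℝ) = Nat.fib (n + 1) + Nat.fib n := by
      rw [Nat.fib_add_two]; push_cast; ring
    have hsq : phi ^ 2 = phi + 1 := by rw [phi_eq_gold]; exact Real.goldenRatio_sq
    have h : phi ^ (n + 2) = phi ^ (n + 1) + phi ^ n := by
      have : phi ^ (n + 2) = phi ^ n * phi ^ 2 := by ring
      rw [this, hsq]; ring
    rw [hf, h]
    exact add_le_add ih2 ih1

lemma abs_goldConj_mul_phi : |Real.goldenConj| * phi = 1 := by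
  have h1 : |Real.goldenConj| = -Real.goldenConj := abs_of_neg Real.goldenConj_neg
  rw [h1, phi_eq_gold]
  have := Real.goldenConj_mul_goldenRatio
  linarith

theorem stmt17 (α : ℝ) (n : ℕ → ℝ) (c : ℝ)
    (happrox : ∀ k : ℕ, 1 ≤ k → nd (α * n k - Int.fract (phi * k)) ≤ c / k)
    (i R : ℕ) (hi : 2 ≤ i) (hR : F i ≤ R) :
    ∃ σ : ℕ → ℕ, Set.BijOn σ (Set.Ico 0 (F i)) (Set.Icc 1 (F i)) ∧
      ∀ k, k ≤ F i - 1 →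
        nd (α * n (R + k) - (σ k : ℝ) / F i) ≤ (1 + c) / F i := by
  classical
  set q : ℕ := F i with hqdef
  have hq2 : 2 ≤ q := by
    have h : Nat.fib 3 ≤ Nat.fib (i + 1) := Nat.fib_mono (by omega)
    simpa [hqdef, F, show Nat.fib 3 = 2 from rfl] using h
  have hq0 : 0 < q := by omega
  have hq0' : (0 : ℝ) < q := by exact_mod_cast hq0
  have hqne : (q : ℝ) ≠ 0 := ne_of_gt hq0'
  set p : ℕ := Nat.fib (i + 2) with hpdef
  set θ : ℝ := (q : ℝ) * phi - p with hθdef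
  have hθeq : θ = -Real.goldenConj ^ (i + 1) := by
    have h := fib_mul_phi (i + 1)
    rw [hθdef]
    have hq : (q : ℝ) = Nat.fib (i + 1) := by rw [hqdef]; rfl
    have hp : (p : ℝ) = Nat.fib (i + 2) := by rw [hpdef]
    rw [hq, hp, h]
    ring
  have hphipos : (0 : ℝ) < phi := by rw [phi_eq_gold]; exact Real.goldenRatio_pos
  have hθabs : (q : ℝ) * |θ| ≤ 1 := by
    have h1 : |θ| = |Real.goldenConj| ^ (i + 1) := by rw [hθeq, abs_neg, abs_pow]
    have h2 : (q : ℝ) ≤ phi ^ (i + 1) := by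
      have := fib_le_phi_pow (i + 1)
      rw [hqdef]; exact this
    have h3 : (phi * |Real.goldenConj|) ^ (i + 1) = 1 := by
      rw [mul_comm, abs_goldConj_mul_phi, one_pow]
    have h4 : (0 : ℝ) ≤ |Real.goldenConj| ^ (i + 1) := by positivity
    calc (q : ℝ) * |θ| = (q : ℝ) * |Real.goldenConj| ^ (i + 1) := by rw [h1]
      _ ≤ phi ^ (i + 1) * |Real.goldenConj| ^ (i + 1) := by
          exact mul_le_mul_of_nonneg_right h2 h4
      _ = (phi * |Real.goldenConj|) ^ (i + 1) := by rw [mul_pow]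
      _ = 1 := h3
  have hqφRpos : (0 : ℝ) ≤ (q : ℝ) * (phi * R) := by positivity
  set B : ℕ := (⌊(q : ℝ) * (phi * R)⌋).toNat with hBdef
  have hBfl : (B : ℤ) = ⌊(q : ℝ) * (phi * R)⌋ := by
    rw [hBdef]
    exact Int.toNat_of_nonneg (Int.floor_nonneg.mpr hqφRpos)
  set δ : ℝ := (q : ℝ) * (phi * R) - B with hδdef
  have hδ0 : 0 ≤ δ := by
    rw [hδdef]
    have : ((B : ℤ) : ℝ) ≤ (q : ℝ) * (phi * R) := by rw [hBfl]; exact Int.floor_le _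
    push_cast at this
    linarith
  have hδ1 : δ < 1 := by
    rw [hδdef]
    have : (q : ℝ) * (phi * R) < (B : ℤ) + 1 := by rw [hBfl]; exact Int.lt_floor_add_one _
    push_cast at this
    linarith
  set e : ℕ := if 0 ≤ θ then 1 else 0 with hedef
  set A : ℕ := B + e + (q - 1) with hAdef
  set σ : ℕ → ℕ := fun k => (A + k * p) % q + 1 with hσdef
  have hmaps : Set.MapsTo σ (Set.Ico 0 q) (Set.Icc 1 q) := by
    intro k _
    have hlt := Nat.mod_lt (A + k * p) hq0
    simp only [hσdef, Set.mem_Icc]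
    omega
  have hinj : Set.InjOn σ (Set.Ico 0 q) := by
    intro k hk k' hk' h
    simp only [Set.mem_Ico] at hk hk'
    have h1 : (A + k * p) % q = (A + k' * p) % q := by
      simp only [hσdef] at h; omega
    have h2 : k * p ≡ k' * p [MOD q] := Nat.ModEq.add_left_cancel' A h1
    have hcop : Nat.Coprime q p := Nat.fib_coprime_fib_succ (i + 1)
    have h3 : k ≡ k' [MOD q] := h2.cancel_right_of_coprime hcop
    have h4 : k % q = k' % q := h3
    rw [Nat.mod_eq_of_lt hk.2, Nat.mod_eq_of_lt hk'.2] at h4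
    exact h4
  have hsurj : Set.SurjOn σ (Set.Ico 0 q) (Set.Icc 1 q) := by
    have hinj' : Set.InjOn σ ↑(Finset.Ico 0 q) := by
      rw [Finset.coe_Ico]; exact hinj
    have hcard : (Finset.image σ (Finset.Ico 0 q)).card = (Finset.Icc 1 q).card := by
      rw [Finset.card_image_of_injOn hinj', Nat.card_Ico, Nat.card_Icc]
      omega
    have hsub : Finset.image σ (Finset.Ico 0 q) ⊆ Finset.Icc 1 q := by
      intro v hv
      simp only [Finset.mem_image, Finset.mem_Ico] at hv
      obtain ⟨k, hk, rfl⟩ := hv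
      have := hmaps (Set.mem_Ico.mpr hk)
      simpa [Finset.mem_Icc, Set.mem_Icc] using this
    have heq : Finset.image σ (Finset.Ico 0 q) = Finset.Icc 1 q :=
      Finset.eq_of_subset_of_card_le hsub (le_of_eq hcard.symm)
    intro v hv
    have : v ∈ Finset.Icc 1 q := by simpa [Finset.mem_Icc, Set.mem_Icc] using hv
    rw [← heq] at this
    simp only [Finset.mem_image, Finset.mem_Ico] at this
    obtain ⟨k, hk, hkv⟩ := this
    exact ⟨k, Set.mem_Ico.mpr hk, hkv⟩
  refine ⟨σ, ⟨hmaps, hinj, hsurj⟩, ?_⟩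
  intro k hk
  have hkq : k < q := by omega
  -- key bound : nd (phi * (R + k) - σ k / q) ≤ 1/q
  have hσle : σ k ≤ q := by
    have hlt := Nat.mod_lt (A + k * p) hq0
    simp only [hσdef]
    omega
  have hkey : nd (phi * ((R : ℝ) + k) - (σ k : ℝ) / q) ≤ 1 / q := by
    have hdvd : (q : ℤ) ∣ ((B : ℤ) + k * p + e - σ k) := by
      have hσint : (σ k : ℤ) = ((A : ℤ) + k * p) % q + 1 := by
        simp only [hσdef]
        push_cast [Int.natCast_mod]
        ring
      have hA : (A : ℤ) = (B : ℤ) + e + q - 1 := by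
        rw [hAdef]
        push_cast [Nat.cast_sub (by omega : 1 ≤ q)]
        ring
      have hmoddef : ((A : ℤ) + k * p) % q
          = (A : ℤ) + k * p - q * (((A : ℤ) + k * p) / q) := by
        rw [Int.emod_def]
      refine ⟨(((A : ℤ) + k * p) / q) - 1, ?_⟩
      rw [hσint, hmoddef, hA]
      ring
    obtain ⟨M, hM⟩ := hdvd
    have hMr : (B : ℝ) + k * p + e - σ k = q * M := by exact_mod_cast hM
    have hqphi : (q : ℝ) * phi = p + θ := by rw [hθdef]; ring
    have hδr : (q : ℝ) * (phi * R) = B + δ := by rw [hδdef]; ring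
    have key : phi * ((R : ℝ) + k) * q = σ k + (δ + k * θ - e) + M * q := by
      have h1 : phi * ((R : ℝ) + k) * q = q * (phi * R) + k * (q * phi) := by ring
      rw [h1, hqphi, hδr]
      linear_combination hMr
    have hexpr : phi * ((R : ℝ) + k) - (σ k : ℝ) / q = (δ + k * θ - e) / q + (M : ℤ) := by
      field_simp
      linear_combination key
    rw [hexpr, nd_add_int]
    refine (nd_le_abs _).trans ?_
    rw [abs_div, abs_of_pos hq0']
    have habs : |δ + k * θ - e| ≤ 1 := by
      have hkθ : |(k : ℝ) * θ| ≤ 1 := by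
        rw [abs_mul, Nat.abs_cast]
        have hkle : (k : ℝ) ≤ q := by exact_mod_cast hkq.le
        have hθnn := abs_nonneg θ
        nlinarith
      rw [abs_le] at hkθ ⊢
      by_cases hθ0 : 0 ≤ θ
      · have he : e = 1 := by rw [hedef, if_pos hθ0]
        have hkθ0 : 0 ≤ (k : ℝ) * θ := mul_nonneg (by positivity) hθ0
        rw [he]
        push_cast
        constructor <;> linarith
      · have he : e = 0 := by rw [hedef, if_neg hθ0]
        have hkθ0 : (k : ℝ) * θ ≤ 0 :=
          mul_nonpos_of_nonneg_of_nonpos (by positivity) (le_of_not_ge hθ0)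
        rw [he]
        push_cast
        constructor <;> linarith
    gcongr
  have hc0 : 0 ≤ c := by
    have h := happrox 1 le_rfl
    simp only [Nat.cast_one, div_one] at h
    exact le_trans (nd_nonneg _) h
  have hRk1 : 1 ≤ R + k := by omega
  have h1 := happrox (R + k) hRk1
  have h4 : nd (Int.fract (phi * ((R + k : ℕ) : ℝ)) - (σ k : ℝ) / q) ≤ 1 / q := by
    have hfr : Int.fract (phi * ((R + k : ℕ) : ℝ)) - (σ k : ℝ) / q
        = (phi * ((R : ℝ) + k) - (σ k : ℝ) / q)
          + ((-⌊phi * ((R + k : ℕ) : ℝ)⌋ : ℤ) : ℝ) := by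
      rw [Int.fract]
      push_cast
      ring
    rw [hfr, nd_add_int]
    exact hkey
  have h2 : c / ((R + k : ℕ) : ℝ) ≤ c / q := by
    have hle : (q : ℝ) ≤ ((R + k : ℕ) : ℝ) := by exact_mod_cast (by omega : q ≤ R + k)
    gcongr
  have htri := nd_tri (α * n (R + k)) (Int.fract (phi * ((R + k : ℕ) : ℝ))) ((σ k : ℝ) / q)
  have hfin : (1 + c) / (q : ℝ) = c / q + 1 / q := by ring
  rw [hfin]
  calc nd (α * n (R + k) - (σ k : ℝ) / q)
      ≤ nd (α * n (R + k) - Int.fract (phi * ((R + k : ℕ) : ℝ)))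
        + nd (Int.fract (phi * ((R + k : ℕ) : ℝ)) - (σ k : ℝ) / q) := htri
    _ ≤ c / ((R + k : ℕ) : ℝ) + 1 / q := add_le_add h1 h4
    _ ≤ c / q + 1 / q := add_le_add h2 le_rfl
end
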